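/- There is an absolute constant C > 0 such that for all integers n and m with 1 ≤ m ≤ n, and every z ∈ [x₂, 1], ((n−m)!/(n+m)!) · ∫_z^1 P_n^m(x)² dx ≤ C · √(1 − z) / n. -/

import Mathlib

open scoped Real

/-- The Legendre polynomial `P_n(x) = (1/(2^n n!)) (d/dx)^n (x² − 1)^n`. -/
noncomputable def legendreP (n : ℕ) (x : ℝ) : ℝ :=
  (1 / (2 ^ n * (n.factorial : ℝ))) * iteratedDeriv n (fun t : ℝ => (t ^ 2 - 1) ^ n) x

/-- The associated Legendre function
`P_n^m(x) = (1 − x²)^{m/2} (d/dx)^m P_n(x)`. -/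
noncomputable def assocLegendreP (n m : ℕ) (x : ℝ) : ℝ :=
  (1 - x ^ 2) ^ ((m : ℝ) / 2) * iteratedDeriv m (legendreP n) x

/-- The `L²(S²)`-normalized associated Legendre function
`f_{n,m}(x) = √((n−m)!/(n+m)!) P_n^m(x)`. -/
noncomputable def fLeg (n m : ℕ) (x : ℝ) : ℝ :=
  Real.sqrt (((n - m).factorial : ℝ) / ((n + m).factorial : ℝ)) * assocLegendreP n m x

/-- `x₀ = √(1 − m²/(n(n+1)))`. -/
noncomputable def xZero (n m : ℕ) : ℝ :=
  Real.sqrt (1 - (m : ℝ) ^ 2 / ((n : ℝ) * ((n : ℝ) + 1)))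

/-- `x₂ = √(1 − m²/(3n(n+1)))`. -/
noncomputable def xTwo (n m : ℕ) : ℝ :=
  Real.sqrt (1 - (m : ℝ) ^ 2 / (3 * (n : ℝ) * ((n : ℝ) + 1)))

/-- `t = √(x₀² + (m+1)/(n(n+1)))`. -/
noncomputable def tPoint (n m : ℕ) : ℝ :=
  Real.sqrt ((xZero n m) ^ 2 + ((m : ℝ) + 1) / ((n : ℝ) * ((n : ℝ) + 1)))


open Polynomial Finset

lemma iteratedDeriv_polyEval (p : Polynomial ℝ) (k : ℕ) :
    iteratedDeriv k (fun x => p.eval x) = fun x => (derivative^[k] p).eval x := by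
  induction k with
  | zero => simp
  | succ k ih =>
    rw [iteratedDeriv_succ, ih, Function.iterate_succ_apply']
    funext x
    exact Polynomial.deriv (p := derivative^[k] p)

lemma legendreP_eq (n : ℕ) : legendreP n = fun x =>
    Polynomial.eval x (C (1/(2^n * n.factorial : ℝ)) * derivative^[n] (((X : Polynomial ℝ)^2 - 1)^n)) := by
  funext x
  unfold legendreP
  rw [show (fun t : ℝ => (t^2-1)^n) = fun t : ℝ => (((X : Polynomial ℝ)^2 - 1)^n).eval t by
    funext t; simp]
  rw [iteratedDeriv_polyEval]
  simp

lemma iteratedDeriv_legendreP (n m : ℕ) (x : ℝ) :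
    iteratedDeriv m (legendreP n) x
      = (1/(2^n * n.factorial : ℝ)) * (derivative^[n+m] (((X : Polynomial ℝ)^2 - 1)^n)).eval x := by
  rw [legendreP_eq, iteratedDeriv_polyEval, Polynomial.iterate_derivative_C_mul]
  rw [show n + m = m + n from Nat.add_comm n m, Function.iterate_add_apply]
  simp

open Finset in
lemma factRatio (n : ℕ) : ∀ m : ℕ, m ≤ n → (n+m).factorial ≤ (n - m).factorial * (n*(n+1))^m := by
  intro m
  induction m with
  | zero => simp
  | succ m ih =>
    intro h
    have hm : m ≤ n := by omega
    calc (n+(m+1)).factorial = (n+m+1) * (n+m).factorial := by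
          rw [show n+(m+1) = (n+m)+1 by omega, Nat.factorial_succ]
      _ ≤ (n+m+1) * ((n-m).factorial * (n*(n+1))^m) := Nat.mul_le_mul_left _ (ih hm)
      _ = (n+m+1) * (((n-m)*(n-(m+1)).factorial) * (n*(n+1))^m) := by
          rw [show n-m = (n-(m+1))+1 by omega, Nat.factorial_succ]
      _ = ((n+m+1)*(n-m)) * ((n-(m+1)).factorial * (n*(n+1))^m) := by ring
      _ ≤ (n*(n+1)) * ((n-(m+1)).factorial * (n*(n+1))^m) := by
          refine Nat.mul_le_mul_right _ ?_
          have h1 : n - m = n - m := rfl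
          obtain ⟨d, hd, hd1⟩ : ∃ d, n = m + d ∧ 1 ≤ d := ⟨n - m, by omega, by omega⟩
          subst hd
          have : m + d - m = d := by omega
          rw [this]
          nlinarith
      _ = (n-(m+1)).factorial * (n*(n+1))^(m+1) := by ring

lemma combNat (n m : ℕ) (hmn : m ≤ n) : ∀ r, r ≤ n - m →
    n.factorial * m.factorial * (n-m).factorial * m^r
      ≤ (m+r).factorial * (n-r).factorial * (n-m-r).factorial * (n*(n+1))^r := by
  intro r
  induction r with
  | zero => intro _; simp; exact Nat.le_of_eq (by ring)
  | succ r ih =>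
    intro hr
    have hr' : r ≤ n - m := by omega
    have H := ih hr'
    have key : m * ((n-r) * (n-m-r)) ≤ (m+r+1) * (n*(n+1)) := by
      refine Nat.mul_le_mul (by omega) (Nat.mul_le_mul (by omega) (by omega))
    calc n.factorial * m.factorial * (n-m).factorial * m^(r+1)
        = (n.factorial * m.factorial * (n-m).factorial * m^r) * m := by ring
      _ ≤ ((m+r).factorial * (n-r).factorial * (n-m-r).factorial * (n*(n+1))^r) * m :=
          Nat.mul_le_mul_right _ H
      _ = (m * ((n-r) * (n-m-r))) *
            ((m+r).factorial * (n-(r+1)).factorial * (n-m-(r+1)).factorial * (n*(n+1))^r) := by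
          rw [show n-r = (n-(r+1))+1 by omega, show n-m-r = (n-m-(r+1))+1 by omega,
            Nat.factorial_succ, Nat.factorial_succ]
          ring
      _ ≤ ((m+r+1) * (n*(n+1))) *
            ((m+r).factorial * (n-(r+1)).factorial * (n-m-(r+1)).factorial * (n*(n+1))^r) :=
          Nat.mul_le_mul_right _ key
      _ = (m+(r+1)).factorial * (n-(r+1)).factorial * (n-m-(r+1)).factorial * (n*(n+1))^(r+1) := by
          rw [show m+(r+1) = (m+r)+1 by omega, Nat.factorial_succ]
          ring

lemma starNat (n m r : ℕ) (hm : m ≤ n) (hr : r ≤ n - m) :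
    (n+m).choose (m+r) * n.descFactorial (n-r) * n.descFactorial (m+r)
        * (m^r * m.factorial * (n-m).factorial * r.factorial)
      ≤ (n+m).factorial * n.factorial * (n*(n+1))^r := by
  have h1 : (n+m).choose (m+r) * (m+r).factorial * (n-r).factorial = (n+m).factorial := by
    have := Nat.choose_mul_factorial_mul_factorial (show m+r ≤ n+m by omega)
    rwa [show n+m-(m+r) = n-r by omega] at this
  have h2 : r.factorial * n.descFactorial (n-r) = n.factorial := by
    have := Nat.factorial_mul_descFactorial (show n - r ≤ n by omega)
    rwa [show n-(n-r) = r by omega] at this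
  have h3 : (n-m-r).factorial * n.descFactorial (m+r) = n.factorial := by
    have := Nat.factorial_mul_descFactorial (show m + r ≤ n by omega)
    rwa [show n-(m+r) = n-m-r by omega] at this
  have hpos : 0 < (m+r).factorial * ((n-r).factorial * (n-m-r).factorial) := by positivity
  refine Nat.le_of_mul_le_mul_right ?_ hpos
  calc ((n+m).choose (m+r) * n.descFactorial (n-r) * n.descFactorial (m+r)
        * (m^r * m.factorial * (n-m).factorial * r.factorial))
        * ((m+r).factorial * ((n-r).factorial * (n-m-r).factorial))
      = ((n+m).choose (m+r) * (m+r).factorial * (n-r).factorial)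
          * (r.factorial * n.descFactorial (n-r))
          * ((n-m-r).factorial * n.descFactorial (m+r))
          * (m^r * m.factorial * (n-m).factorial) := by ring
    _ = (n+m).factorial * n.factorial * n.factorial * (m^r * m.factorial * (n-m).factorial) := by
          rw [h1, h2, h3]
    _ = ((n+m).factorial * n.factorial)
          * (n.factorial * m.factorial * (n-m).factorial * m^r) := by ring
    _ ≤ ((n+m).factorial * n.factorial)
          * ((m+r).factorial * (n-r).factorial * (n-m-r).factorial * (n*(n+1))^r) :=
          Nat.mul_le_mul_left _ (combNat n m hm r hr)
    _ = ((n+m).factorial * n.factorial * (n*(n+1))^r)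
          * ((m+r).factorial * ((n-r).factorial * (n-m-r).factorial)) := by ring

open Polynomial Finset in
lemma derivBound (n m : ℕ) (hm1 : 1 ≤ m) (hmn : m ≤ n) {x : ℝ}
    (hx45 : 4/5 ≤ x) (hx1 : x ≤ 1)
    (hq : 1 - x^2 ≤ (m:ℝ)^2/(3*((n:ℝ)*((n:ℝ)+1)))) :
    |(derivative^[n+m] (((X : Polynomial ℝ)^2 - 1)^n)).eval x|
      ≤ ((n+m).factorial : ℝ) * n.factorial * 2^(n-m) / (m.factorial * (n-m).factorial)
          * Real.exp (5*m/54) := by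
  have hn1 : 1 ≤ n := hm1.trans hmn
  set A : ℝ := ((n+m).factorial : ℝ) * n.factorial * 2^(n-m) / (m.factorial * (n-m).factorial)
    with hA
  have hA0 : 0 ≤ A := by positivity
  set y : ℝ := 5*m/54 with hy
  have hy0 : 0 ≤ y := by positivity
  have hN2 : (0:ℝ) < (n:ℝ)*((n:ℝ)+1) := by positivity
  have hfact : ((X : Polynomial ℝ)^2 - 1)^n = (X + C (-1:ℝ))^n * (X + C (1:ℝ))^n := by
    rw [← mul_pow]; congr 1; simp; ring
  rw [hfact, Polynomial.iterate_derivative_mul, eval_finset_sum]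
  refine le_trans (Finset.abs_sum_le_sum_abs _ _) (le_trans (Finset.sum_le_sum (g := fun k =>
      (if k < m then (0:ℝ) else A * y^(k-m)/(k-m).factorial)) ?_) ?_)
  · intro k hk
    rw [mem_range] at hk
    show _ ≤ if k < m then (0:ℝ) else A * y^(k-m)/(k-m).factorial
    rw [Polynomial.iterate_derivative_X_add_pow, Polynomial.iterate_derivative_X_add_pow]
    by_cases hkm : k < m
    · have hz : n.descFactorial (n+m-k) = 0 := Nat.descFactorial_eq_zero_iff_lt.mpr (by omega)
      simp [hz, if_pos hkm]
    · push_neg at hkm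
      rw [if_neg (by omega)]
      by_cases hkn : n < k
      · have hz : n.descFactorial k = 0 := Nat.descFactorial_eq_zero_iff_lt.mpr hkn
        simp [hz]
        positivity
      · push_neg at hkn
        obtain ⟨r, hkr⟩ : ∃ r, k = m + r := ⟨k - m, by omega⟩
        subst hkr
        have hrnm : r ≤ n - m := by omega
        obtain ⟨s, hs⟩ : ∃ s, n - m = r + s := ⟨n - m - r, by omega⟩
        have hsub1 : n - (n + m - (m + r)) = r := by omega
        have hsub2 : n + m - (m + r) = n - r := by omega
        have hsub3 : n - (m + r) = s := by omega
        have hsub4 : m + r - m = r := by omega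
        have hsub5 : n - (n - r) = r := by omega
        rw [hsub4]
        simp only [hsub1, hsub2, hsub3, hsub5, eval_smul, smul_eq_mul, eval_mul, eval_pow,
          eval_add, eval_X, eval_C, nsmul_eq_mul, eval_natCast, abs_mul, abs_pow, Nat.abs_cast]
        rw [show |x + (-1:ℝ)| = 1 - x by rw [abs_of_nonpos (by linarith)]; ring]
        rw [show |x + (1:ℝ)| = x + 1 by rw [abs_of_nonneg (by linarith)]]
        have h0 : (0:ℝ) ≤ (1-x)^r := pow_nonneg (by linarith) r
        have h1 : (0:ℝ) ≤ (x+1)^s := pow_nonneg (by linarith) s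
        have hdel : 1 - x ≤ 5*(m:ℝ)^2/(27*((n:ℝ)*((n:ℝ)+1))) := by
          have h9 : (1-x)*(9/5) ≤ (1-x)*(1+x) :=
            mul_le_mul_of_nonneg_left (by linarith) (by linarith)
          have h10 : (1-x)*(1+x) = 1 - x^2 := by ring
          have h11 : (1-x)*(9/5) ≤ (m:ℝ)^2/(3*((n:ℝ)*((n:ℝ)+1))) :=
            h9.trans (h10.le.trans hq)
          have hqe : 5*(m:ℝ)^2/(27*((n:ℝ)*((n:ℝ)+1)))
              = ((m:ℝ)^2/(3*((n:ℝ)*((n:ℝ)+1))))*(5/9) := by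
            field_simp
            ring
          rw [hqe]
          linarith
        have hb1 : (1-x)^r ≤ (5*(m:ℝ)^2/(27*((n:ℝ)*((n:ℝ)+1))))^r :=
          pow_le_pow_left₀ (by linarith) hdel r
        have hb2 : (x+1)^s ≤ (2:ℝ)^s := pow_le_pow_left₀ (by linarith) (by linarith) s
        have hstar := starNat n m r hmn hrnm
        have hcast : (((n+m).choose (m+r) : ℝ) * (n.descFactorial (n-r)) * (n.descFactorial (m+r)))
            * ((m:ℝ)^r * m.factorial * (n-m).factorial * r.factorial)
            ≤ ((n+m).factorial : ℝ) * n.factorial * ((n:ℝ)*((n:ℝ)+1))^r := by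
          have := (Nat.cast_le (α := ℝ)).mpr hstar
          push_cast at this
          convert this using 1 <;> ring
        have hT : (((n+m).choose (m+r) : ℝ) * (n.descFactorial (n-r)) * (n.descFactorial (m+r)))
            ≤ ((n+m).factorial : ℝ) * n.factorial * ((n:ℝ)*((n:ℝ)+1))^r
              / ((m:ℝ)^r * m.factorial * (n-m).factorial * r.factorial) := by
          rw [le_div_iff₀ (by positivity)]
          exact hcast
        have hm0 : (0:ℝ) < (m:ℝ) := by exact_mod_cast hm1
        have key : (((n+m).choose (m+r) : ℝ) * (n.descFactorial (n-r)) * (n.descFactorial (m+r)))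
                * ((1-x)^r * (x+1)^s)
            ≤ (((n+m).factorial : ℝ) * n.factorial * ((n:ℝ)*((n:ℝ)+1))^r
                / ((m:ℝ)^r * m.factorial * (n-m).factorial * r.factorial))
                * ((5*(m:ℝ)^2/(27*((n:ℝ)*((n:ℝ)+1))))^r * (2:ℝ)^s) :=
          mul_le_mul hT (mul_le_mul hb1 hb2 h1 (by positivity)) (mul_nonneg h0 h1) (by positivity)
        have heq : (((n+m).factorial : ℝ) * n.factorial * ((n:ℝ)*((n:ℝ)+1))^r
                / ((m:ℝ)^r * m.factorial * (n-m).factorial * r.factorial))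
                * ((5*(m:ℝ)^2/(27*((n:ℝ)*((n:ℝ)+1))))^r * (2:ℝ)^s)
            = A * y^r / r.factorial := by
          have hdd : (5*(m:ℝ)^2/(27*((n:ℝ)*((n:ℝ)+1))))^r
              = y^r*2^r*(m:ℝ)^r/(((n:ℝ)*((n:ℝ)+1))^r) := by
            rw [eq_div_iff (by positivity), ← mul_pow, ← mul_pow, ← mul_pow]
            congr 1
            rw [hy]
            field_simp
            ring
          rw [hA, show n - m = r + s from hs, pow_add, hdd]
          have habs : ∀ (a P M F1 F2 F3 Y R2 S2 : ℝ), P ≠ 0 → M ≠ 0 → F1 ≠ 0 → F2 ≠ 0 →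
              F3 ≠ 0 →
              a * P / (M * F1 * F2 * F3) * (Y * R2 * M / P * S2)
                = a * (R2 * S2) / (F1 * F2) * Y / F3 := by
            intro a P M F1 F2 F3 Y R2 S2 e1 e2 e3 e4 e5
            field_simp
          exact habs _ _ _ _ _ _ _ _ _ (by positivity) (by positivity) (by positivity)
            (by positivity) (by positivity)
        exact le_of_eq_of_le (by ring) (key.trans_eq heq)
  · have hsplit : ∑ k ∈ range (n+m+1), (if k < m then (0:ℝ) else A * y^(k-m)/(k-m).factorial)
        = ∑ k ∈ Finset.Ico m (n+m+1), (if k < m then (0:ℝ) else A * y^(k-m)/(k-m).factorial) := by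
      rw [Finset.range_eq_Ico]
      refine (Finset.sum_subset (Finset.Ico_subset_Ico (Nat.zero_le m) le_rfl) ?_).symm
      intro k hk hk2
      simp only [Finset.mem_Ico] at hk hk2
      rw [if_pos (by omega)]
    rw [Nat.succ_eq_add_one, hsplit, Finset.sum_Ico_eq_sum_range, show n+m+1-m = n+1 by omega]
    have hcong : ∀ i ∈ range (n+1), (if m + i < m then (0:ℝ) else A * y^(m+i-m)/(m+i-m).factorial)
        = A * (y^i/(i).factorial) := by
      intro i _
      rw [if_neg (by omega), show m+i-m = i by omega, mul_div_assoc]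
    rw [Finset.sum_congr rfl hcong, ← Finset.mul_sum]
    exact mul_le_mul_of_nonneg_left (Real.sum_le_exp_of_nonneg hy0 _) hA0

open Polynomial in
lemma pointwiseBound (n m : ℕ) (hm1 : 1 ≤ m) (hmn : m ≤ n) {x : ℝ}
    (hx2 : xTwo n m ≤ x) (hx1 : x ≤ 1) :
    (((n-m).factorial : ℝ)/((n+m).factorial : ℝ)) * (assocLegendreP n m x)^2
      ≤ ((n+m).factorial : ℝ)/(((n-m).factorial : ℝ) * ((m.factorial:ℝ))^2 * 2^m)
          * Real.exp (5*m/27) * (1-x)^m := by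
  have hn1 : 1 ≤ n := hm1.trans hmn
  have hnR : (1:ℝ) ≤ (n:ℝ) := by exact_mod_cast hn1
  have hmn' : (m:ℝ) ≤ (n:ℝ) := by exact_mod_cast hmn
  have hq1 : (m:ℝ)^2/(3*((n:ℝ)*((n:ℝ)+1))) ≤ 1/3 := by
    rw [div_le_div_iff₀ (by positivity) (by norm_num)]
    nlinarith
  have hq0 : (0:ℝ) ≤ (m:ℝ)^2/(3*((n:ℝ)*((n:ℝ)+1))) := by positivity
  have hx2eq : xTwo n m = Real.sqrt (1 - (m:ℝ)^2/(3*((n:ℝ)*((n:ℝ)+1)))) := by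
    rw [xTwo, mul_assoc]
  have h45 : (4/5 : ℝ) ≤ xTwo n m := by
    rw [hx2eq, show (4/5:ℝ) = Real.sqrt ((4/5)^2) by rw [Real.sqrt_sq (by norm_num)]]
    apply Real.sqrt_le_sqrt
    norm_num
    linarith
  have hx45 : 4/5 ≤ x := le_trans h45 hx2
  have hxsq : 1 - x^2 ≤ (m:ℝ)^2/(3*((n:ℝ)*((n:ℝ)+1))) := by
    have h1 : xTwo n m ^ 2 = 1 - (m:ℝ)^2/(3*((n:ℝ)*((n:ℝ)+1))) := by
      rw [hx2eq]
      exact Real.sq_sqrt (by linarith)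
    have h2nn : (0:ℝ) ≤ xTwo n m := by rw [hx2eq]; exact Real.sqrt_nonneg _
    have h2 : xTwo n m ^ 2 ≤ x^2 := pow_le_pow_left₀ h2nn hx2 2
    nlinarith
  have h1x2 : (0:ℝ) ≤ 1 - x^2 := by nlinarith
  have hD := derivBound n m hm1 hmn hx45 hx1 hxsq
  have hiD : iteratedDeriv m (legendreP n) x
      = (1/(2^n * n.factorial : ℝ))
          * (derivative^[n+m] (((X : Polynomial ℝ)^2-1)^n)).eval x :=
    iteratedDeriv_legendreP n m x
  set D : ℝ := ((n+m).factorial : ℝ)/((m.factorial:ℝ) * ((n-m).factorial:ℝ) * 2^m)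
      * Real.exp (5*m/54) with hDdef
  have habs : |iteratedDeriv m (legendreP n) x| ≤ D := by
    rw [hiD, abs_mul, abs_of_nonneg (by positivity : (0:ℝ) ≤ 1/(2^n * n.factorial : ℝ))]
    calc (1/(2^n * n.factorial : ℝ))
          * |(derivative^[n+m] (((X : Polynomial ℝ)^2-1)^n)).eval x|
        ≤ (1/(2^n * n.factorial : ℝ)) * (((n+m).factorial : ℝ) * n.factorial * 2^(n-m)
            / (m.factorial * (n-m).factorial) * Real.exp (5*m/54)) :=
          mul_le_mul_of_nonneg_left hD (by positivity)
      _ = D := by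
          rw [hDdef, show (2:ℝ)^(n-m) = 2^n/2^m by
            rw [eq_div_iff (by positivity), ← pow_add]; congr 1; omega]
          have e1 : ((n.factorial:ℝ)) ≠ 0 := by positivity
          have e2 : ((m.factorial:ℝ)) ≠ 0 := by positivity
          have e3 : (((n-m).factorial:ℝ)) ≠ 0 := by positivity
          field_simp
  have hD0 : (0:ℝ) ≤ D := le_trans (abs_nonneg _) habs
  have hsq : (iteratedDeriv m (legendreP n) x)^2 ≤ D^2 := by
    rw [← sq_abs]
    exact pow_le_pow_left₀ (abs_nonneg _) habs 2
  have hrp : ((1-x^2) ^ ((m:ℝ)/2))^2 = (1-x^2)^m := by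
    rw [← Real.rpow_natCast ((1-x^2) ^ ((m:ℝ)/2)) 2, ← Real.rpow_mul h1x2]
    rw [show (m:ℝ)/2 * ((2:ℕ):ℝ) = (m:ℝ) by push_cast; ring]
    exact Real.rpow_natCast _ m
  have hpow2 : (1-x^2)^m ≤ 2^m * (1-x)^m := by
    rw [← mul_pow]
    exact pow_le_pow_left₀ h1x2 (by nlinarith) m
  have hrp0 : (0:ℝ) ≤ (1-x^2)^((m:ℝ)/2) := Real.rpow_nonneg h1x2 _
  calc (((n-m).factorial : ℝ)/((n+m).factorial : ℝ)) * (assocLegendreP n m x)^2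
      = (((n-m).factorial : ℝ)/((n+m).factorial : ℝ))
          * ((1-x^2)^m * (iteratedDeriv m (legendreP n) x)^2) := by
        rw [assocLegendreP, mul_pow, hrp]
    _ ≤ (((n-m).factorial : ℝ)/((n+m).factorial : ℝ)) * ((2^m * (1-x)^m) * D^2) := by
        have hx1m : (0:ℝ) ≤ (1-x)^m := pow_nonneg (by linarith) m
        refine mul_le_mul_of_nonneg_left ?_ (by positivity)
        refine mul_le_mul hpow2 hsq (sq_nonneg _) (by positivity)
    _ = ((n+m).factorial : ℝ)/(((n-m).factorial : ℝ) * ((m.factorial:ℝ))^2 * 2^m)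
          * Real.exp (5*m/27) * (1-x)^m := by
        have hexp : (Real.exp (5*(m:ℝ)/54))^2 = Real.exp (5*m/27) := by
          rw [sq, ← Real.exp_add]
          congr 1
          ring
        rw [hDdef, mul_pow, hexp]
        have e1 : (((n+m).factorial:ℝ)) ≠ 0 := by positivity
        have e2 : ((m.factorial:ℝ)) ≠ 0 := by positivity
        have e3 : (((n-m).factorial:ℝ)) ≠ 0 := by positivity
        have e4 : ((2:ℝ)^m) ≠ 0 := by positivity
        field_simp

lemma finalNum (n m : ℕ) (hm1 : 1 ≤ m) (hmn : m ≤ n) {δ : ℝ} (hδ0 : 0 ≤ δ)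
    (hδ : δ ≤ 5*(m:ℝ)^2/(27*((n:ℝ)*((n:ℝ)+1)))) :
    ((n+m).factorial : ℝ)/(((n-m).factorial:ℝ) * ((m.factorial:ℝ))^2 * 2^m)
        * Real.exp (5*m/27) * (δ^(m+1)/(m+1))
      ≤ Real.sqrt δ / n := by
  have hn1 : 1 ≤ n := hm1.trans hmn
  have hnR : (1:ℝ) ≤ (n:ℝ) := by exact_mod_cast hn1
  have hmR : (1:ℝ) ≤ (m:ℝ) := by exact_mod_cast hm1
  have hN2 : (0:ℝ) < (n:ℝ)*((n:ℝ)+1) := by positivity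
  set Δ : ℝ := 5*(m:ℝ)^2/(27*((n:ℝ)*((n:ℝ)+1))) with hΔdef
  have hΔ0 : 0 ≤ Δ := by positivity
  set K : ℝ := ((n+m).factorial : ℝ)/(((n-m).factorial:ℝ) * ((m.factorial:ℝ))^2 * 2^m)
      * Real.exp (5*m/27) with hKdef
  have hK0 : 0 ≤ K := by positivity
  set e1 : ℝ := Real.exp 1 with he1def
  have he1 : e1 ≤ 2.7182818286 := le_of_lt Real.exp_one_lt_d9
  have he1pos : 0 < e1 := Real.exp_pos 1
  -- main product bound
  have hb1 : ((n+m).factorial : ℝ) ≤ ((n-m).factorial:ℝ) * ((n:ℝ)*((n:ℝ)+1))^m := by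
    have := (Nat.cast_le (α := ℝ)).mpr (factRatio n m hmn)
    push_cast at this
    convert this using 2 <;> push_cast <;> ring
  have hb2 : (m:ℝ)^m ≤ (m.factorial:ℝ) * e1^m := by
    have h := Real.pow_div_factorial_le_exp (x := (m:ℝ)) (by positivity) m
    rw [div_le_iff₀ (by positivity)] at h
    calc (m:ℝ)^m ≤ Real.exp m * m.factorial := h
      _ = (m.factorial:ℝ) * e1^m := by
          rw [he1def, show ((m:ℝ)) = ((m:ℕ):ℝ)*1 by push_cast; ring, Real.exp_nat_mul]
          ring
  have hb4 : Real.exp ((5:ℝ)*m/27) ≤ (37/27 : ℝ)^m := by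
    rw [show (5:ℝ)*m/27 = ((m:ℕ):ℝ)*(5/27) by push_cast; ring, Real.exp_nat_mul]
    refine pow_le_pow_left₀ (Real.exp_pos _).le ?_ m
    have h := Real.exp_bound' (x := 5/27) (by norm_num) (by norm_num) (n := 1) one_pos
    norm_num [Finset.sum_range_one] at h
    linarith
  have hKD1 : K * Δ^m ≤ 1 := by
    have hdenom : (0:ℝ) < ((n-m).factorial:ℝ) * ((m.factorial:ℝ))^2 * 2^m := by positivity
    rw [hKdef, div_mul_eq_mul_div, div_mul_eq_mul_div, div_le_one hdenom]
    have hbase : ((n:ℝ)*((n:ℝ)+1))*(37/27)*Δ ≤ 2*(m:ℝ)^2/e1^2 := by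
      have hNΔ : ((n:ℝ)*((n:ℝ)+1))*(37/27)*Δ = 185*(m:ℝ)^2/729 := by
        rw [hΔdef]
        field_simp
        ring
      rw [hNΔ, div_le_div_iff₀ (by norm_num) (by positivity)]
      have he2 : e1^2 ≤ 7.3890561 := by
        rw [pow_two]
        exact (mul_le_mul he1 he1 he1pos.le (by norm_num)).trans (by norm_num)
      nlinarith [mul_nonneg (sq_nonneg ((m:ℝ))) (sub_nonneg.mpr he2)]
    have hq2 : (2*(m:ℝ)^2/e1^2)^m = 2^m * ((m:ℝ)^m/e1^m)^2 := by
      ring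
    have hb2' : ((m:ℝ)^m/e1^m)^2 ≤ ((m.factorial:ℝ))^2 := by
      refine pow_le_pow_left₀ (by positivity) ?_ 2
      rw [div_le_iff₀ (by positivity)]
      linarith [hb2]
    calc ((n+m).factorial : ℝ) * Real.exp (5*m/27) * Δ^m
        ≤ (((n-m).factorial:ℝ) * ((n:ℝ)*((n:ℝ)+1))^m) * (37/27:ℝ)^m * Δ^m := by
          refine mul_le_mul (mul_le_mul hb1 hb4 (Real.exp_pos _).le (by positivity))
            le_rfl (by positivity) (by positivity)
      _ = ((n-m).factorial:ℝ) * (((n:ℝ)*((n:ℝ)+1))*(37/27)*Δ)^m := by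
          rw [mul_pow (((n:ℝ)*((n:ℝ)+1))*(37/27:ℝ)) Δ m,
            mul_pow ((n:ℝ)*((n:ℝ)+1)) (37/27:ℝ) m]
          ring
      _ ≤ ((n-m).factorial:ℝ) * (2*(m:ℝ)^2/e1^2)^m := by
          refine mul_le_mul_of_nonneg_left (pow_le_pow_left₀ ?_ hbase m) (by positivity)
          rw [hΔdef]
          positivity
      _ = ((n-m).factorial:ℝ) * (((m:ℝ)^m/e1^m)^2 * 2^m) := by rw [hq2]; ring
      _ ≤ ((n-m).factorial:ℝ) * (((m.factorial:ℝ))^2 * 2^m) := by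
          refine mul_le_mul_of_nonneg_left (mul_le_mul_of_nonneg_right hb2' (by positivity))
            (by positivity)
      _ = ((n-m).factorial:ℝ) * ((m.factorial:ℝ))^2 * 2^m := by ring
  -- √Δ ≤ m/(2n)
  have hsΔ : Real.sqrt Δ ≤ (m:ℝ)/(2*n) := by
    have h1 : Δ ≤ ((m:ℝ)/(2*n))^2 := by
      rw [hΔdef, div_pow, div_le_div_iff₀ (by positivity) (by positivity)]
      nlinarith [mul_nonneg (sq_nonneg ((m:ℝ))) (sq_nonneg ((n:ℝ))),
        mul_nonneg (sq_nonneg ((m:ℝ))) (by positivity : (0:ℝ) ≤ (n:ℝ))]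
    calc Real.sqrt Δ ≤ Real.sqrt (((m:ℝ)/(2*n))^2) := Real.sqrt_le_sqrt h1
      _ = (m:ℝ)/(2*n) := Real.sqrt_sq (by positivity)
  have hm1R : (0:ℝ) < (m:ℝ)+1 := by positivity
  calc K * (δ^(m+1)/(m+1))
      = K * δ^m * δ / ((m:ℕ)+1 : ℝ) := by rw [pow_succ]; push_cast; ring
    _ ≤ K * Δ^m * δ / ((m:ℕ)+1 : ℝ) := by
        have h' : K * δ^m ≤ K * Δ^m :=
          mul_le_mul_of_nonneg_left (pow_le_pow_left₀ hδ0 hδ m) hK0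
        exact (div_le_div_iff_of_pos_right hm1R).mpr (mul_le_mul_of_nonneg_right h' hδ0)
    _ ≤ 1 * δ / ((m:ℕ)+1 : ℝ) :=
        (div_le_div_iff_of_pos_right hm1R).mpr (mul_le_mul_of_nonneg_right hKD1 hδ0)
    _ = Real.sqrt δ * Real.sqrt δ / ((m:ℕ)+1:ℝ) := by rw [Real.mul_self_sqrt hδ0]; ring
    _ ≤ Real.sqrt δ * ((m:ℝ)/(2*n)) / ((m:ℕ)+1:ℝ) := by
        have hss : Real.sqrt δ ≤ (m:ℝ)/(2*n) := (Real.sqrt_le_sqrt hδ).trans hsΔ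
        exact (div_le_div_iff_of_pos_right hm1R).mpr
          (mul_le_mul_of_nonneg_left hss (Real.sqrt_nonneg δ))
    _ ≤ Real.sqrt δ / n := by
        have hs0 : 0 ≤ Real.sqrt δ := Real.sqrt_nonneg δ
        rw [div_le_div_iff₀ hm1R (by positivity : (0:ℝ) < (n:ℝ))]
        have hid : Real.sqrt δ * ((m:ℝ)/(2*(n:ℝ))) * (n:ℝ) = Real.sqrt δ * (m:ℝ)/2 := by
          field_simp
        rw [hid]
        push_cast
        nlinarith

/-- `L²` tail bound beyond `x₂`: there is an absolute constant
`C > 0` such that for `1 ≤ m ≤ n` and `z ∈ [x₂, 1]`,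
`((n−m)!/(n+m)!) ∫_z^1 P_n^m(x)² dx ≤ C √(1−z)/n`. -/
theorem stmt16 :
    ∃ C > (0 : ℝ), ∀ n m : ℕ, 1 ≤ m → m ≤ n → ∀ z ∈ Set.Icc (xTwo n m) 1,
      (((n - m).factorial : ℝ) / ((n + m).factorial : ℝ)) *
          (∫ x in z..1, (assocLegendreP n m x) ^ 2)
        ≤ C * Real.sqrt (1 - z) / (n : ℝ) := by
  refine ⟨1, one_pos, ?_⟩
  intro n m hm1 hmn z hz
  obtain ⟨hz1, hz2⟩ := hz
  have hn1 : 1 ≤ n := hm1.trans hmn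
  have hnR : (1:ℝ) ≤ (n:ℝ) := by exact_mod_cast hn1
  have hmn' : (m:ℝ) ≤ (n:ℝ) := by exact_mod_cast hmn
  have hmR : (1:ℝ) ≤ (m:ℝ) := by exact_mod_cast hm1
  have hq1 : (m:ℝ)^2/(3*((n:ℝ)*((n:ℝ)+1))) ≤ 1/3 := by
    rw [div_le_div_iff₀ (by positivity) (by norm_num)]
    nlinarith
  have hq0 : (0:ℝ) ≤ (m:ℝ)^2/(3*((n:ℝ)*((n:ℝ)+1))) := by positivity
  have hx2eq : xTwo n m = Real.sqrt (1 - (m:ℝ)^2/(3*((n:ℝ)*((n:ℝ)+1)))) := by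
    rw [xTwo, mul_assoc]
  have hx2nn : 0 ≤ xTwo n m := by rw [hx2eq]; exact Real.sqrt_nonneg _
  have hx2le1 : xTwo n m ≤ 1 := by
    rw [hx2eq]
    calc Real.sqrt (1 - (m:ℝ)^2/(3*((n:ℝ)*((n:ℝ)+1)))) ≤ Real.sqrt 1 :=
          Real.sqrt_le_sqrt (by linarith)
      _ = 1 := Real.sqrt_one
  have hsq2 : xTwo n m ^ 2 = 1 - (m:ℝ)^2/(3*((n:ℝ)*((n:ℝ)+1))) := by
    rw [hx2eq]; exact Real.sq_sqrt (by linarith)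
  have hδup : 1 - z ≤ 5*(m:ℝ)^2/(27*((n:ℝ)*((n:ℝ)+1))) := by
    have h9 : (1 - xTwo n m)*(9/5) ≤ (1 - xTwo n m)*(1 + xTwo n m) := by
      refine mul_le_mul_of_nonneg_left ?_ (by linarith)
      have h45 : (4/5 : ℝ) ≤ xTwo n m := by
        rw [hx2eq, show (4/5:ℝ) = Real.sqrt ((4/5)^2) by rw [Real.sqrt_sq (by norm_num)]]
        apply Real.sqrt_le_sqrt
        norm_num
        linarith
      linarith
    have h10 : (1 - xTwo n m)*(1 + xTwo n m) = 1 - xTwo n m^2 := by ring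
    have h11 : (1 - xTwo n m)*(9/5) ≤ (m:ℝ)^2/(3*((n:ℝ)*((n:ℝ)+1))) := by
      rw [h10, hsq2] at h9
      linarith
    have hqe : 5*(m:ℝ)^2/(27*((n:ℝ)*((n:ℝ)+1)))
        = ((m:ℝ)^2/(3*((n:ℝ)*((n:ℝ)+1))))*(5/9) := by
      field_simp
      ring
    rw [hqe]
    linarith
  have hδ0 : (0:ℝ) ≤ 1 - z := by linarith
  -- continuity
  have hcont1 : Continuous (fun x : ℝ => (assocLegendreP n m x)^2) := by
    refine Continuous.pow ?_ 2
    refine Continuous.mul ?_ ?_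
    · refine Continuous.rpow_const (continuous_const.sub (continuous_pow 2)) ?_
      intro x
      right
      positivity
    · have heq : iteratedDeriv m (legendreP n)
          = fun x : ℝ => (1/(2^n * n.factorial : ℝ))
              * (Polynomial.derivative^[n+m] (((Polynomial.X : Polynomial ℝ)^2-1)^n)).eval x :=
        funext (iteratedDeriv_legendreP n m)
      rw [heq]
      exact continuous_const.mul (Polynomial.continuous _)
  have hint1 : IntervalIntegrable (fun x : ℝ =>
      (((n-m).factorial:ℝ)/((n+m).factorial:ℝ)) * (assocLegendreP n m x)^2)
      MeasureTheory.volume z 1 :=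
    (continuous_const.mul hcont1).intervalIntegrable z 1
  have hint2 : IntervalIntegrable (fun x : ℝ =>
      ((n+m).factorial : ℝ)/(((n-m).factorial:ℝ) * ((m.factorial:ℝ))^2 * 2^m)
        * Real.exp (5*m/27) * (1-x)^m) MeasureTheory.volume z 1 :=
    ((continuous_const.mul ((continuous_const.sub continuous_id).pow m)).intervalIntegrable z 1)
  have hI : (∫ x in z..(1:ℝ), (1-x)^m) = (1-z)^(m+1)/(m+1) := by
    have h := intervalIntegral.integral_comp_sub_left (a := z) (b := 1)
      (fun t : ℝ => t^m) 1
    rw [h, show (1:ℝ)-1 = 0 by norm_num, integral_pow,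
      zero_pow (by omega : m + 1 ≠ 0)]
    ring
  rw [← intervalIntegral.integral_const_mul]
  calc (∫ x in z..(1:ℝ),
        (((n-m).factorial:ℝ)/((n+m).factorial:ℝ)) * (assocLegendreP n m x)^2)
      ≤ ∫ x in z..(1:ℝ), (((n+m).factorial : ℝ)
          /(((n-m).factorial:ℝ) * ((m.factorial:ℝ))^2 * 2^m)
          * Real.exp (5*m/27) * (1-x)^m) := by
        refine intervalIntegral.integral_mono_on hz2 hint1 hint2 ?_
        intro x hx
        exact pointwiseBound n m hm1 hmn (le_trans hz1 hx.1) hx.2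
    _ = ((n+m).factorial : ℝ)/(((n-m).factorial:ℝ) * ((m.factorial:ℝ))^2 * 2^m)
          * Real.exp (5*m/27) * ((1-z)^(m+1)/(m+1)) := by
        rw [← hI, ← intervalIntegral.integral_const_mul]
    _ ≤ Real.sqrt (1-z) / n := finalNum n m hm1 hmn hδ0 hδup
    _ = 1 * Real.sqrt (1-z) / n := by ring
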